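/- For positive semidefinite matrices M ⪯ N in ℝ^{d×d} and vector a ∈ ℝ^d with a in the image of M, appending the rank-one matrix a a^T preserves the ordering of quadratic forms of pseudoinverses: a^T (N + a a^T)^+ a ≤ a^T (M + a a^T)^+ a. -/

import Mathlib

open Matrix

/-- `B` is the Moore–Penrose pseudoinverse of `A`. -/
def IsMoorePenrose {n d : Type*} [Fintype n] [Fintype d]
    (A : Matrix n d ℝ) (B : Matrix d n ℝ) : Prop :=
  A * B * A = A ∧ B * A * B = B ∧ (A * B)ᵀ = A * B ∧ (B * A)ᵀ = B * A

lemma vecMulVec_mulVec_eq {d : ℕ} (a b x : Fin d → ℝ) :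
    vecMulVec a b *ᵥ x = (b ⬝ᵥ x) • a := by
  ext i; simp [mulVec, vecMulVec_apply, dotProduct, Finset.mul_sum, mul_comm, mul_left_comm]

lemma vecMulVec_transpose_eq {d : ℕ} (a b : Fin d → ℝ) :
    (vecMulVec a b)ᵀ = vecMulVec b a := by
  ext i j; simp [vecMulVec_apply, mul_comm]

lemma dp_mulVec_left {d : ℕ} (A : Matrix (Fin d) (Fin d) ℝ) (u v : Fin d → ℝ) :
    (A *ᵥ u) ⬝ᵥ v = u ⬝ᵥ (Aᵀ *ᵥ v) := by
  rw [dotProduct_comm, Matrix.dotProduct_mulVec, ← Matrix.mulVec_transpose, dotProduct_comm]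

/-- Uniqueness of the Moore–Penrose pseudoinverse. -/
lemma isMoorePenrose_unique {n d : Type*} [Fintype n] [Fintype d]
    (A : Matrix n d ℝ) (B C : Matrix d n ℝ)
    (hB : IsMoorePenrose A B) (hC : IsMoorePenrose A C) : B = C := by
  obtain ⟨hB1, hB2, hB3, hB4⟩ := hB
  obtain ⟨hC1, hC2, hC3, hC4⟩ := hC
  have hAB : A * B = A * C := by
    calc A * B = (A * C * A) * B := by rw [hC1]
      _ = (A * C) * (A * B) := by simp only [Matrix.mul_assoc]
      _ = (A * C)ᵀ * (A * B)ᵀ := by rw [hC3, hB3]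
      _ = ((A * B) * (A * C))ᵀ := (Matrix.transpose_mul (A * B) (A * C)).symm
      _ = ((A * B * A) * C)ᵀ := by simp only [Matrix.mul_assoc]
      _ = (A * C)ᵀ := by rw [hB1]
      _ = A * C := hC3
  have hBA : B * A = C * A := by
    calc B * A = B * (A * C * A) := by rw [hC1]
      _ = (B * A) * (C * A) := by simp only [Matrix.mul_assoc]
      _ = (B * A)ᵀ * (C * A)ᵀ := by rw [hB4, hC4]
      _ = ((C * A) * (B * A))ᵀ := (Matrix.transpose_mul (C * A) (B * A)).symm
      _ = (C * (A * B * A))ᵀ := by simp only [Matrix.mul_assoc]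
      _ = (C * A)ᵀ := by rw [hB1]
      _ = C * A := hC4
  calc B = B * A * B := hB2.symm
    _ = (C * A) * B := by rw [hBA]
    _ = C * (A * B) := by rw [Matrix.mul_assoc]
    _ = C * (A * C) := by rw [hAB]
    _ = C * A * C := by rw [Matrix.mul_assoc]
    _ = C := hC2

/-- For PSD matrices `M ⪯ N` and `a ∈ Im M`, appending the rank-one matrix `a aᵀ` preserves
the ordering of pseudoinverse quadratic forms: `aᵀ(N + a aᵀ)⁺a ≤ aᵀ(M + a aᵀ)⁺a`. -/
theorem pinv_quadratic_rank_one_update {d : ℕ} (M N : Matrix (Fin d) (Fin d) ℝ)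
    (hM : M.PosSemidef) (hN : N.PosSemidef) (hMN : (N - M).PosSemidef)
    (a : Fin d → ℝ) (ha : ∃ y : Fin d → ℝ, M *ᵥ y = a)
    (P Q : Matrix (Fin d) (Fin d) ℝ)
    (hP : IsMoorePenrose (M + vecMulVec a a) P)
    (hQ : IsMoorePenrose (N + vecMulVec a a) Q) :
    a ⬝ᵥ (Q *ᵥ a) ≤ a ⬝ᵥ (P *ᵥ a) := by
  obtain ⟨y, hy⟩ := ha
  set M' := M + vecMulVec a a with hM'def
  set N' := N + vecMulVec a a with hN'def
  have hMt : Mᵀ = M := hM.1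
  have hNt : Nᵀ = N := hN.1
  have hM's : M'ᵀ = M' := by
    rw [hM'def, Matrix.transpose_add, hMt, vecMulVec_transpose_eq]
  have hN's : N'ᵀ = N' := by
    rw [hN'def, Matrix.transpose_add, hNt, vecMulVec_transpose_eq]
  have symdp : ∀ u v : Fin d → ℝ, u ⬝ᵥ (M' *ᵥ v) = v ⬝ᵥ (M' *ᵥ u) := by
    intro u v
    rw [dotProduct_comm, dp_mulVec_left, hM's]
  -- M' is PSD on quadratic forms
  have hM'psd : ∀ x : Fin d → ℝ, 0 ≤ x ⬝ᵥ (M' *ᵥ x) := by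
    intro x
    have h1 : 0 ≤ x ⬝ᵥ (M *ᵥ x) := by simpa using hM.dotProduct_mulVec_nonneg x
    have h2 : x ⬝ᵥ (vecMulVec a a *ᵥ x) = (a ⬝ᵥ x) ^ 2 := by
      rw [vecMulVec_mulVec_eq, dotProduct_smul, dotProduct_comm]
      ring_nf
    rw [hM'def, Matrix.add_mulVec, dotProduct_add, h2]
    positivity
  -- M' ⪯ N' on quadratic forms
  have hle : ∀ x : Fin d → ℝ, x ⬝ᵥ (M' *ᵥ x) ≤ x ⬝ᵥ (N' *ᵥ x) := by
    intro x
    have h1 : 0 ≤ x ⬝ᵥ ((N - M) *ᵥ x) := by simpa using hMN.dotProduct_mulVec_nonneg x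
    have h2 : N' = M' + (N - M) := by rw [hM'def, hN'def]; abel
    have h3 : N' *ᵥ x = M' *ᵥ x + (N - M) *ᵥ x := by
      rw [h2]; exact Matrix.add_mulVec M' (N - M) x
    rw [h3, dotProduct_add]
    linarith
  -- a is in the image of M'
  have hay : 0 ≤ a ⬝ᵥ y := by
    have := hM.dotProduct_mulVec_nonneg y
    rw [← hy, dotProduct_comm]
    simpa using this
  set c : ℝ := 1 + a ⬝ᵥ y with hc
  have hcpos : 0 < c := by rw [hc]; linarith
  set w : Fin d → ℝ := c⁻¹ • y with hw
  have hM'w : M' *ᵥ w = a := by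
    rw [hw, hM'def, Matrix.mulVec_smul, Matrix.add_mulVec, hy, vecMulVec_mulVec_eq]
    rw [smul_add, smul_smul, ← add_smul]
    have h3 : c⁻¹ + c⁻¹ * (a ⬝ᵥ y) = 1 := by
      rw [← mul_one c⁻¹, mul_assoc, ← mul_add, one_mul, ← hc,
        inv_mul_cancel₀ (ne_of_gt hcpos)]
    rw [h3, one_smul]
  -- Q is symmetric
  have hQs : Qᵀ = Q := by
    apply isMoorePenrose_unique N' Qᵀ Q _ hQ
    obtain ⟨h1, h2, h3, h4⟩ := hQ
    refine ⟨?_, ?_, ?_, ?_⟩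
    · have := congrArg Matrix.transpose h1
      simpa [Matrix.transpose_mul, hN's, Matrix.mul_assoc] using this
    · have := congrArg Matrix.transpose h2
      simpa [Matrix.transpose_mul, hN's, Matrix.mul_assoc] using this
    · calc (N' * Qᵀ)ᵀ = Q * N'ᵀ := by rw [Matrix.transpose_mul, Matrix.transpose_transpose]
        _ = Q * N' := by rw [hN's]
        _ = (Q * N')ᵀ := h4.symm
        _ = N'ᵀ * Qᵀ := by rw [Matrix.transpose_mul]
        _ = N' * Qᵀ := by rw [hN's]
    · calc (Qᵀ * N')ᵀ = N'ᵀ * Q := by rw [Matrix.transpose_mul, Matrix.transpose_transpose]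
        _ = N' * Q := by rw [hN's]
        _ = (N' * Q)ᵀ := h3.symm
        _ = Qᵀ * N'ᵀ := by rw [Matrix.transpose_mul]
        _ = Qᵀ * N' := by rw [hN's]
  set x : Fin d → ℝ := Q *ᵥ a with hx
  -- key identities
  have key1 : a ⬝ᵥ (P *ᵥ a) = w ⬝ᵥ (M' *ᵥ w) := by
    conv_lhs => rw [← hM'w]
    rw [dp_mulVec_left, hM's, Matrix.mulVec_mulVec, Matrix.mulVec_mulVec, hP.1]
  have key2 : x ⬝ᵥ (N' *ᵥ x) = a ⬝ᵥ (Q *ᵥ a) := by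
    rw [hx, dp_mulVec_left, hQs, Matrix.mulVec_mulVec, Matrix.mulVec_mulVec, hQ.2.1]
  have keyax : a ⬝ᵥ x = a ⬝ᵥ (Q *ᵥ a) := by rw [hx]
  have haw2 : x ⬝ᵥ (M' *ᵥ w) = a ⬝ᵥ x := by rw [hM'w, dotProduct_comm]
  have haw1 : w ⬝ᵥ (M' *ᵥ x) = a ⬝ᵥ x := by rw [symdp, haw2]
  have expand : (w - x) ⬝ᵥ (M' *ᵥ (w - x)) =
      w ⬝ᵥ (M' *ᵥ w) - 2 * (a ⬝ᵥ x) + x ⬝ᵥ (M' *ᵥ x) := by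
    rw [Matrix.mulVec_sub, dotProduct_sub, sub_dotProduct, sub_dotProduct, haw1, haw2]
    ring
  have pos := hM'psd (w - x)
  have hlex := hle x
  linarith [key1, key2, keyax, expand, pos, hlex]
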